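/- For integers t0, t1 with t0 ≤ -1 and t1 ≥ 2, the rational number (t0 - 1 - 1/t1) has continued fraction expansion [t0 - 2, -2, -2, ..., -2] with t1 - 1 trailing entries equal to -2, and consequently the product |(r_0+1)···(r_{k-1}+1) r_k| computed from this expansion equals 2|t0 - 1|. -/

import Mathlib

/-- The continued fraction `[r₀,...,r_k] = r₀ - 1/(r₁ - 1/(⋯ - 1/r_k))`. -/
def cf : List ℚ → ℚ
  | [] => 0
  | [r] => r
  | r :: s :: rest => r - 1 / cf (s :: rest)

/-- `N = |(r₀+1)(r₁+1)⋯(r_{k-1}+1) · r_k|` for the expansion `[r₀,...,r_k]`. -/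
def cfN (l : List ℚ) : ℚ := |((l.dropLast).map (· + 1)).prod * l.getLastD 0|

lemma cf_rep (n : ℕ) : cf (List.replicate (n+1) (-2 : ℚ)) = -((n:ℚ)+2)/((n:ℚ)+1) := by
  induction n with
  | zero => simp [cf]
  | succ n ih =>
    have h2 : List.replicate (n+2) (-2:ℚ) = -2 :: -2 :: List.replicate n (-2) := rfl
    rw [h2, cf, show (-2:ℚ) :: List.replicate n (-2) = List.replicate (n+1) (-2) from rfl, ih]
    have h : ((n:ℚ)+1) ≠ 0 := by positivity
    have h' : ((n:ℚ)+2) ≠ 0 := by positivity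
    rw [one_div_div, div_neg]
    push_cast
    field_simp
    ring

lemma cf_head (x : ℚ) (n : ℕ) :
    cf (x :: List.replicate (n+1) (-2 : ℚ)) = x - 1 / (-((n:ℚ)+2)/((n:ℚ)+1)) := by
  have h2 : x :: List.replicate (n+1) (-2:ℚ) = x :: -2 :: List.replicate n (-2) := rfl
  rw [h2, cf, show (-2:ℚ) :: List.replicate n (-2) = List.replicate (n+1) (-2) from rfl, cf_rep]

lemma cfN_head (x : ℚ) (n : ℕ) :
    cfN (x :: List.replicate (n+1) (-2 : ℚ)) = 2 * |x + 1| := by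
  have heq : x :: List.replicate (n+1) (-2:ℚ) = (x :: List.replicate n (-2)) ++ [-2] := by
    simp [List.replicate_succ']
  have hd : (x :: List.replicate (n+1) (-2:ℚ)).dropLast = x :: List.replicate n (-2) := by
    rw [heq, List.dropLast_concat]
  have hl : (x :: List.replicate (n+1) (-2:ℚ)).getLastD 0 = -2 := by
    rw [heq, List.getLastD_eq_getLast?, List.getLast?_concat]
    rfl
  rw [cfN, hd, hl]
  simp only [List.map_cons, List.map_replicate, List.prod_cons, List.prod_replicate]
  norm_num
  ring

theorem cf_case_b1 (t0 t1 : ℤ) (h0 : t0 ≤ -1) (h1 : 2 ≤ t1) :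
    cf (((t0 : ℚ) - 2) :: List.replicate (t1 - 1).toNat (-2))
        = (t0 : ℚ) - 1 - 1 / (t1 : ℚ) ∧
      cfN (((t0 : ℚ) - 2) :: List.replicate (t1 - 1).toNat (-2))
        = 2 * |(t0 : ℚ) - 1| := by
  obtain ⟨n, hn⟩ : ∃ n : ℕ, (t1 - 1).toNat = n + 1 := by
    refine ⟨(t1 - 2).toNat, ?_⟩
    omega
  rw [hn]
  have hcast : ((n:ℚ) + 2) = (t1 : ℚ) := by
    have : (t1 : ℤ) = n + 2 := by omega
    rw [this]; push_cast; ring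
  constructor
  · rw [cf_head, one_div_div, div_neg, hcast]
    have ht1 : (t1 : ℚ) ≠ 0 := by
      have : (0:ℤ) < t1 := by omega
      exact_mod_cast this.ne'
    field_simp
    linarith [hcast]
  · rw [cfN_head]
    ring_nf
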